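/- arXiv:0906.1126 — 7 statements merged into one kernel-verified Lean document; each statement's English description precedes it below -/
import Mathlib

section
/- For all integers m, n ≥ 3 with m ≡ 0 (mod 11) and n ≡ 0 (mod 11), the chromatic number of the square of T_{m,n} = C_m □ C_n satisfies χ(T_{m,n}²) ≤ 6. -/
open SimpleGraph

/-- The square of a simple graph `G`: distinct vertices are adjacent iff they are
adjacent in `G` or have a common neighbor in `G` (i.e. are at distance at most 2). -/
def SimpleGraph.square {V : Type*} (G : SimpleGraph V) : SimpleGraph V where
  Adj u v := u ≠ v ∧ (G.Adj u v ∨ ∃ w, G.Adj u w ∧ G.Adj w v)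
  symm := ⟨fun u v => by
    rintro ⟨h, h' | ⟨w, hw1, hw2⟩⟩
    exacts [⟨h.symm, Or.inl h'.symm⟩, ⟨h.symm, Or.inr ⟨w, hw2.symm, hw1.symm⟩⟩]⟩
  loopless := ⟨fun v => by simp⟩

/-- The toroidal grid `T_{m,n} = C_m □ C_n`. -/
def toroidalGrid (m n : ℕ) : SimpleGraph (Fin m × Fin n) :=
  SimpleGraph.cycleGraph m □ SimpleGraph.cycleGraph n

/-- The independence number of a graph: the maximum size of an independent set,
i.e. the clique number of the complement graph. -/
noncomputable def SimpleGraph.indepNum' {V : Type*} (G : SimpleGraph V) : ℕ :=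
  Gᶜ.cliqueNum

def p : ZMod 11 → Fin 6 := ![0,2,4,0,2,4,1,3,5,1,3]

lemma pkey : ∀ x t : ZMod 11, t ≠ 0 → t ≠ 3 → t ≠ 8 → p x ≠ p (x + t) := by decide

lemma castmod {m : ℕ} (hm : 11 ∣ m) (x : ℕ) : ((x % m : ℕ) : ZMod 11) = (x : ZMod 11) := by
  have hm0 : ((m : ℕ) : ZMod 11) = 0 := (ZMod.natCast_eq_zero_iff m 11).2 hm
  conv_rhs => rw [← Nat.mod_add_div x m]
  push_cast
  rw [hm0]
  ring

lemma castAdd {m : ℕ} (hm : 11 ∣ m) (a b : Fin m) :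
    (((a + b).val : ℕ) : ZMod 11) = (a.val : ZMod 11) + b.val := by
  have : (a + b).val = (a.val + b.val) % m := rfl
  rw [this, castmod hm]
  push_cast; ring

lemma castP1 {m : ℕ} [NeZero m] (hm : 11 ∣ m) (a : Fin m) :
    (((a + 1).val : ℕ) : ZMod 11) = (a.val : ZMod 11) + 1 := by
  have h3 : 3 ≤ m := by
    have := NeZero.pos m; rcases hm with ⟨k, rfl⟩; omega
  have h1 : ((1 : Fin m).val : ZMod 11) = 1 := by
    rw [Fin.val_one']
    rw [show (1 % m) = 1 from Nat.mod_eq_of_lt (by omega)]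
    norm_num
  rw [castAdd hm a 1, h1]

lemma castM1 {m : ℕ} [NeZero m] (hm : 11 ∣ m) (a : Fin m) :
    (((a - 1).val : ℕ) : ZMod 11) = (a.val : ZMod 11) - 1 := by
  have := castP1 hm (a - 1)
  rw [sub_add_cancel] at this
  rw [this]; ring

lemma cycStep {m : ℕ} [NeZero m] (hm : 11 ∣ m) {a b : Fin m} (h : (cycleGraph m).Adj a b) :
    b = a + 1 ∨ b = a - 1 := by
  have h3 : 3 ≤ m := by
    have := NeZero.pos m; rcases hm with ⟨k, rfl⟩; omega
  rw [cycleGraph_adj'] at h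
  have h1 : (1 : Fin m).val = 1 := by rw [Fin.val_one']; exact Nat.mod_eq_of_lt (by omega)
  rcases h with h | h
  · right
    have hab : a - b = 1 := Fin.ext (by rw [h, h1])
    have : b = a - (a - b) := by abel
    rw [this, hab]
  · left
    have hab : b - a = 1 := Fin.ext (by rw [h, h1])
    have : b = a + (b - a) := by abel
    rw [this, hab]

theorem stmt10 (m n : ℕ) (hm3 : 3 ≤ m) (hn3 : 3 ≤ n)
    (hm : m % 11 = 0) (hn : n % 11 = 0) :
    (toroidalGrid m n).square.chromaticNumber ≤ 6 := by
  haveI : NeZero m := ⟨by omega⟩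
  haveI : NeZero n := ⟨by omega⟩
  have hm' : 11 ∣ m := Nat.dvd_of_mod_eq_zero hm
  have hn' : 11 ∣ n := Nat.dvd_of_mod_eq_zero hn
  set g : Fin m × Fin n → ZMod 11 :=
    fun u => (u.1.val : ZMod 11) + 5 * (u.2.val : ZMod 11) with hg
  have g1 : ∀ (a : Fin m) (b : Fin n), g (a + 1, b) = g (a, b) + 1 := by
    intro a b; simp only [hg, castP1 hm']; ring
  have g2 : ∀ (a : Fin m) (b : Fin n), g (a - 1, b) = g (a, b) - 1 := by
    intro a b; simp only [hg, castM1 hm']; ring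
  have g3 : ∀ (a : Fin m) (b : Fin n), g (a, b + 1) = g (a, b) + 5 := by
    intro a b; simp only [hg, castP1 hn']; ring
  have g4 : ∀ (a : Fin m) (b : Fin n), g (a, b - 1) = g (a, b) - 5 := by
    intro a b; simp only [hg, castM1 hn']; ring
  have step : ∀ u v : Fin m × Fin n, (toroidalGrid m n).Adj u v →
      (v = (u.1 + 1, u.2) ∨ v = (u.1 - 1, u.2) ∨ v = (u.1, u.2 + 1) ∨ v = (u.1, u.2 - 1)) := by
    intro u v h
    rw [toroidalGrid, boxProd_adj] at h
    rcases h with ⟨h1, h2⟩ | ⟨h1, h2⟩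
    · rcases cycStep hm' h1 with h | h
      · exact Or.inl (Prod.ext h h2.symm)
      · exact Or.inr (Or.inl (Prod.ext h h2.symm))
    · rcases cycStep hn' h1 with h | h
      · exact Or.inr (Or.inr (Or.inl (Prod.ext h2.symm h)))
      · exact Or.inr (Or.inr (Or.inr (Prod.ext h2.symm h)))
  have key : ∀ u v : Fin m × Fin n, (toroidalGrid m n).square.Adj u v →
      p (g u) ≠ p (g v) := by
    rintro u v ⟨hne, hadj⟩
    have ht : ∃ t : ZMod 11, t ≠ 0 ∧ t ≠ 3 ∧ t ≠ 8 ∧ g v = g u + t := by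
      rcases hadj with h | ⟨w, hw1, hw2⟩
      · rcases step u v h with rfl | rfl | rfl | rfl <;>
          first
          | (refine ⟨1, by decide, by decide, by decide, ?_⟩
             simp only [g1, g2, g3, g4]
             try ring
             done)
          | (refine ⟨-1, by decide, by decide, by decide, ?_⟩
             simp only [g1, g2, g3, g4]
             try ring
             done)
          | (refine ⟨5, by decide, by decide, by decide, ?_⟩
             simp only [g1, g2, g3, g4]
             try ring
             done)
          | (refine ⟨-5, by decide, by decide, by decide, ?_⟩
             simp only [g1, g2, g3, g4]
             try ring
             done)
      · rcases step u w hw1 with rfl | rfl | rfl | rfl <;>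
          rcases step _ v hw2 with rfl | rfl | rfl | rfl <;>
          first
          | (refine absurd ?_ hne
             simp [Prod.ext_iff]
             done)
          | (refine ⟨2, by decide, by decide, by decide, ?_⟩
             simp only [g1, g2, g3, g4]
             try ring
             done)
          | (refine ⟨-2, by decide, by decide, by decide, ?_⟩
             simp only [g1, g2, g3, g4]
             try ring
             done)
          | (refine ⟨10, by decide, by decide, by decide, ?_⟩
             simp only [g1, g2, g3, g4]
             try ring
             done)
          | (refine ⟨-10, by decide, by decide, by decide, ?_⟩
             simp only [g1, g2, g3, g4]
             try ring
             done)
          | (refine ⟨6, by decide, by decide, by decide, ?_⟩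
             simp only [g1, g2, g3, g4]
             try ring
             done)
          | (refine ⟨-6, by decide, by decide, by decide, ?_⟩
             simp only [g1, g2, g3, g4]
             try ring
             done)
          | (refine ⟨4, by decide, by decide, by decide, ?_⟩
             simp only [g1, g2, g3, g4]
             try ring
             done)
          | (refine ⟨-4, by decide, by decide, by decide, ?_⟩
             simp only [g1, g2, g3, g4]
             try ring
             done)
    obtain ⟨t, ht0, ht3, ht8, hgv⟩ := ht
    rw [hgv]
    exact pkey _ t ht0 ht3 ht8
  have C : (toroidalGrid m n).square.Coloring (Fin 6) :=
    Coloring.mk (fun v => p (g v)) (fun {u v} h => key u v h)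
  have := C.colorable.chromaticNumber_le
  exact_mod_cast this
end

section
/- For all integers m, n ≥ 3, the chromatic number of the square of T_{m,n} = C_m □ C_n satisfies χ(T_{m,n}²) ≥ 5; moreover, χ(T_{m,n}²) = 5 if and only if m ≡ 0 (mod 5) and n ≡ 0 (mod 5). -/
open SimpleGraph

open Fin.CommRing

namespace TG

def ofI (m n : ℕ) [NeZero m] [NeZero n] (p : ℤ × ℤ) : Fin m × Fin n :=
  (((p.1 : ℤ) : Fin m), ((p.2 : ℤ) : Fin n))

variable {m n : ℕ} [NeZero m] [NeZero n]

lemma ofI_add (p q : ℤ × ℤ) : ofI m n (p + q) = ofI m n p + ofI m n q := by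
  simp [ofI, Prod.ext_iff]

lemma ofI_zero : ofI m n 0 = 0 := by simp [ofI, Prod.ext_iff]

def D12 : List (ℤ × ℤ) :=
  [(1,0),(-1,0),(0,1),(0,-1),(2,0),(-2,0),(0,2),(0,-2),(1,1),(1,-1),(-1,1),(-1,-1)]

def plus5 : List (ℤ × ℤ) := [(0,0),(1,0),(-1,0),(0,1),(0,-1)]

def D4 : List (ℤ × ℤ) := [(1,0),(-1,0),(0,1),(0,-1)]

lemma cycle_adj (hm : 3 ≤ m) {u v : Fin m} :
    (cycleGraph m).Adj u v ↔ (u - v = 1 ∨ u - v = -1) := by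
  rw [cycleGraph_adj']
  have h1 : (1 : Fin m).val = 1 := by
    rw [Fin.val_one']; exact Nat.mod_eq_of_lt (by omega)
  constructor
  · rintro (h | h)
    · left; exact Fin.ext (by rw [h1]; exact h)
    · right
      have : v - u = 1 := Fin.ext (by rw [h1]; exact h)
      rw [← neg_sub, this]
  · rintro (h | h)
    · left; rw [h, h1]
    · right
      have : v - u = 1 := by rw [← neg_sub, h, neg_neg]
      rw [this, h1]

lemma torus_adj (hm : 3 ≤ m) (hn : 3 ≤ n) {u v : Fin m × Fin n} :
    (toroidalGrid m n).Adj u v ↔ ∃ d ∈ D4, u = v + ofI m n d := by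
  rw [toroidalGrid, boxProd_adj, cycle_adj hm, cycle_adj hn]
  constructor
  · rintro (⟨(h | h), h2⟩ | ⟨(h | h), h2⟩)
    · refine ⟨(1,0), by norm_num [D4], ?_⟩
      simp only [ofI, Prod.ext_iff, Prod.fst_add, Prod.snd_add]
      push_cast
      exact ⟨by linear_combination h, by linear_combination h2⟩
    · refine ⟨(-1,0), by norm_num [D4], ?_⟩
      simp only [ofI, Prod.ext_iff, Prod.fst_add, Prod.snd_add]
      push_cast
      exact ⟨by linear_combination h, by linear_combination h2⟩
    · refine ⟨(0,1), by norm_num [D4], ?_⟩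
      simp only [ofI, Prod.ext_iff, Prod.fst_add, Prod.snd_add]
      push_cast
      exact ⟨by linear_combination h2, by linear_combination h⟩
    · refine ⟨(0,-1), by norm_num [D4], ?_⟩
      simp only [ofI, Prod.ext_iff, Prod.fst_add, Prod.snd_add]
      push_cast
      exact ⟨by linear_combination h2, by linear_combination h⟩
  · rintro ⟨d, hd, rfl⟩
    fin_cases hd
    · refine Or.inl ⟨Or.inl ?_, ?_⟩ <;> simp [ofI]
    · refine Or.inl ⟨Or.inr ?_, ?_⟩ <;> simp [ofI]
    · refine Or.inr ⟨Or.inl ?_, ?_⟩ <;> simp [ofI]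
    · refine Or.inr ⟨Or.inr ?_, ?_⟩ <;> simp [ofI]

end TG

namespace TG
variable {m n : ℕ} [NeZero m] [NeZero n]

lemma D4_sub_D12 : ∀ d ∈ D4, d ∈ D12 := by decide

lemma D4_add : ∀ d1 ∈ D4, ∀ d2 ∈ D4, d1 + d2 = 0 ∨ d1 + d2 ∈ D12 := by decide

lemma add_ofI_assoc (v : Fin m × Fin n) (p q : ℤ × ℤ) :
    v + ofI m n (p + q) = (v + ofI m n p) + ofI m n q := by
  rw [ofI_add, add_assoc]

lemma two_step (hm : 3 ≤ m) (hn : 3 ≤ n) (v : Fin m × Fin n) (d d1 d2 : ℤ × ℤ)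
    (h1 : d1 ∈ D4) (h2 : d2 ∈ D4) (hsum : d2 + d1 = d)
    (hne : v + ofI m n d ≠ v) :
    (toroidalGrid m n).square.Adj (v + ofI m n d) v := by
  refine ⟨hne, Or.inr ⟨v + ofI m n d2, ?_, ?_⟩⟩
  · exact (torus_adj hm hn).mpr ⟨d1, h1, by rw [← hsum, add_ofI_assoc]⟩
  · exact (torus_adj hm hn).mpr ⟨d2, h2, rfl⟩

lemma square_adj (hm : 3 ≤ m) (hn : 3 ≤ n) {u v : Fin m × Fin n} :
    (toroidalGrid m n).square.Adj u v ↔ u ≠ v ∧ ∃ d ∈ D12, u = v + ofI m n d := by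
  constructor
  · rintro ⟨hne, h | ⟨w, hw1, hw2⟩⟩
    · obtain ⟨d, hd, rfl⟩ := (torus_adj hm hn).mp h
      exact ⟨hne, d, D4_sub_D12 d hd, rfl⟩
    · obtain ⟨d1, hd1, rfl⟩ := (torus_adj hm hn).mp hw1
      obtain ⟨d2, hd2, rfl⟩ := (torus_adj hm hn).mp hw2
      refine ⟨hne, d2 + d1, ?_, by rw [add_ofI_assoc]⟩
      rcases D4_add d2 hd2 d1 hd1 with h0 | h12
      · exfalso; apply hne; rw [← add_ofI_assoc, h0, ofI_zero, add_zero]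
      · exact h12
  · rintro ⟨hne, d, hd, rfl⟩
    fin_cases hd
    · exact ⟨hne, Or.inl ((torus_adj hm hn).mpr ⟨(1,0), by decide, rfl⟩)⟩
    · exact ⟨hne, Or.inl ((torus_adj hm hn).mpr ⟨(-1,0), by decide, rfl⟩)⟩
    · exact ⟨hne, Or.inl ((torus_adj hm hn).mpr ⟨(0,1), by decide, rfl⟩)⟩
    · exact ⟨hne, Or.inl ((torus_adj hm hn).mpr ⟨(0,-1), by decide, rfl⟩)⟩
    · exact two_step hm hn v _ (1,0) (1,0) (by decide) (by decide) (by decide) hne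
    · exact two_step hm hn v _ (-1,0) (-1,0) (by decide) (by decide) (by decide) hne
    · exact two_step hm hn v _ (0,1) (0,1) (by decide) (by decide) (by decide) hne
    · exact two_step hm hn v _ (0,-1) (0,-1) (by decide) (by decide) (by decide) hne
    · exact two_step hm hn v _ (1,0) (0,1) (by decide) (by decide) (by decide) hne
    · exact two_step hm hn v _ (1,0) (0,-1) (by decide) (by decide) (by decide) hne
    · exact two_step hm hn v _ (-1,0) (0,1) (by decide) (by decide) (by decide) hne
    · exact two_step hm hn v _ (-1,0) (0,-1) (by decide) (by decide) (by decide) hne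

end TG

namespace TG
variable {m n : ℕ} [NeZero m] [NeZero n]

lemma ofI_sub (p q : ℤ × ℤ) : ofI m n (p - q) = ofI m n p - ofI m n q := by
  simp [ofI, Prod.ext_iff]

lemma cast_ne_zero {k : ℕ} [NeZero k] (hk : 3 ≤ k) {c : ℤ} (hc : c ≠ 0)
    (hc2 : c.natAbs ≤ 2) : (c : Fin k) ≠ 0 := by
  intro h
  have hdvd : (k : ℤ) ∣ c := (CharP.intCast_eq_zero_iff (Fin k) k c).mp h
  have h2 : k ∣ c.natAbs := by
    have := Int.natAbs_dvd_natAbs.mpr hdvd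
    simpa using this
  have := Nat.le_of_dvd (Int.natAbs_pos.mpr hc) h2
  omega

lemma ofI_ne_zero (hm : 3 ≤ m) (hn : 3 ≤ n) : ∀ d ∈ D12, ofI m n d ≠ 0 := by
  intro d hd h
  rw [ofI, Prod.ext_iff] at h
  fin_cases hd <;>
    first
      | exact absurd h.1 (cast_ne_zero hm (by decide) (by decide))
      | exact absurd h.2 (cast_ne_zero hn (by decide) (by decide))

lemma plus5_pairs : ∀ p ∈ plus5, ∀ q ∈ plus5, p ≠ q → p - q ∈ D12 := by decide

lemma plus_ne (hm : 3 ≤ m) (hn : 3 ≤ n) (w : Fin m × Fin n) {p q : ℤ × ℤ}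
    (hp : p ∈ plus5) (hq : q ∈ plus5) (hpq : p ≠ q) :
    w + ofI m n p ≠ w + ofI m n q := by
  intro h
  have h2 : ofI m n p = ofI m n q := add_left_cancel h
  apply ofI_ne_zero hm hn (p - q) (plus5_pairs p hp q hq hpq)
  rw [ofI_sub, h2, sub_self]

lemma plus_adj (hm : 3 ≤ m) (hn : 3 ≤ n) (w : Fin m × Fin n) {p q : ℤ × ℤ}
    (hp : p ∈ plus5) (hq : q ∈ plus5) (hpq : p ≠ q) :
    (toroidalGrid m n).square.Adj (w + ofI m n p) (w + ofI m n q) := by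
  refine (square_adj hm hn).mpr ⟨plus_ne hm hn w hp hq hpq, p - q,
    plus5_pairs p hp q hq hpq, ?_⟩
  rw [← add_ofI_assoc, show q + (p - q) = p by ring]

lemma modcast {k : ℕ} (h5 : 5 ∣ k) (a : ℕ) : ((a % k : ℕ) : ZMod 5) = (a : ZMod 5) := by
  rw [← ZMod.natCast_mod (a % k) 5, Nat.mod_mod_of_dvd a h5, ZMod.natCast_mod]

def castHom5 (k : ℕ) [NeZero k] (hk : 3 ≤ k) (h5 : 5 ∣ k) : Fin k →+* ZMod 5 where
  toFun x := (x.val : ZMod 5)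
  map_zero' := by simp
  map_one' := by
    show (((1 : Fin k)).val : ZMod 5) = 1
    rw [Fin.val_one', Nat.mod_eq_of_lt (by omega)]; simp
  map_add' x y := by
    show (((x + y).val : ℕ) : ZMod 5) = (x.val : ZMod 5) + (y.val : ZMod 5)
    rw [Fin.val_add, modcast h5, Nat.cast_add]
  map_mul' x y := by
    show (((x * y).val : ℕ) : ZMod 5) = (x.val : ZMod 5) * (y.val : ZMod 5)
    rw [Fin.val_mul, modcast h5, Nat.cast_mul]

def colorFun (hm : 3 ≤ m) (hn : 3 ≤ n) (h5m : 5 ∣ m) (h5n : 5 ∣ n) :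
    Fin m × Fin n → ZMod 5 :=
  fun v => castHom5 m hm h5m v.1 + 2 * castHom5 n hn h5n v.2

lemma color_valid (hm : 3 ≤ m) (hn : 3 ≤ n) (h5m : 5 ∣ m) (h5n : 5 ∣ n) :
    ∀ {u v}, (toroidalGrid m n).square.Adj u v →
      colorFun hm hn h5m h5n u ≠ colorFun hm hn h5m h5n v := by
  intro u v hadj heq
  obtain ⟨hne, d, hd, rfl⟩ := (square_adj hm hn).mp hadj
  have key : ((d.1 : ZMod 5) + 2 * (d.2 : ZMod 5)) = 0 := by
    simp only [colorFun, Prod.fst_add, Prod.snd_add, ofI, map_add, map_intCast] at heq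
    linear_combination heq
  fin_cases hd <;> revert key <;> decide

end TG
-- appended after full.lean content
namespace TG
section Chase
variable {m n : ℕ} [NeZero m] [NeZero n] {S : Set (Fin m × Fin n)}

lemma EX (hL1 : ∀ v ∈ S, ∀ p ∈ D12, v + ofI m n p ∉ S)
    {v : Fin m × Fin n} {s t : ℤ × ℤ} (hs : v + ofI m n s ∈ S) (hd : t - s ∈ D12) :
    v + ofI m n t ∉ S := by
  have := hL1 _ hs (t - s) hd
  rwa [← add_ofI_assoc, show s + (t - s) = t by ring] at this

lemma L0' (hL0 : ∀ v, ∃ p ∈ plus5, v + ofI m n p ∈ S) (v : Fin m × Fin n) (c : ℤ × ℤ) :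
    ∃ p ∈ plus5, v + ofI m n (c + p) ∈ S := by
  obtain ⟨p, hp, h⟩ := hL0 (v + ofI m n c)
  exact ⟨p, hp, by rwa [add_ofI_assoc]⟩

lemma mem_zero {v : Fin m × Fin n} (hv : v ∈ S) : v + ofI m n (0,0) ∈ S := by
  rw [show ((0,0) : ℤ × ℤ) = 0 from rfl, ofI_zero, add_zero]; exact hv

variable (hL0 : ∀ v, ∃ p ∈ plus5, v + ofI m n p ∈ S)
variable (hL1 : ∀ v ∈ S, ∀ p ∈ D12, v + ofI m n p ∉ S)
variable {v : Fin m × Fin n}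
include hL0 hL1

lemma dich (hv : v ∈ S) : v + ofI m n (1,2) ∈ S ∨ v + ofI m n (2,1) ∈ S := by
  obtain ⟨p, hp, h⟩ := L0' hL0 v (1,1)
  have h0 := mem_zero hv
  fin_cases hp
  · exact absurd h (EX hL1 h0 (by decide))
  · exact Or.inr (by rwa [show ((1,1) : ℤ×ℤ) + (1,0) = (2,1) by decide] at h)
  · exact absurd h (EX hL1 h0 (by decide))
  · exact Or.inl (by rwa [show ((1,1) : ℤ×ℤ) + (0,1) = (1,2) by decide] at h)
  · exact absurd h (EX hL1 h0 (by decide))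

lemma chaseA1 (hv : v ∈ S) (h12 : v + ofI m n (1,2) ∈ S) : v + ofI m n (3,1) ∈ S := by
  obtain ⟨p, hp, h⟩ := L0' hL0 v (2,1)
  have h0 := mem_zero hv
  fin_cases hp
  · exact absurd h (EX hL1 h12 (by decide))
  · rwa [show ((2,1) : ℤ×ℤ) + (1,0) = (3,1) by decide] at h
  · exact absurd h (EX hL1 h0 (by decide))
  · exact absurd h (EX hL1 h12 (by decide))
  · exact absurd h (EX hL1 h0 (by decide))

lemma chaseA2 (hv : v ∈ S) (h12 : v + ofI m n (1,2) ∈ S) : v + ofI m n (2,4) ∈ S := by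
  have h31 := chaseA1 hL0 hL1 hv h12
  obtain ⟨p, hp, h⟩ := L0' hL0 v (2,3)
  fin_cases hp
  · exact absurd h (EX hL1 h12 (by decide))
  · exact absurd h (EX hL1 h31 (by decide))
  · exact absurd h (EX hL1 h12 (by decide))
  · rwa [show ((2,3) : ℤ×ℤ) + (0,1) = (2,4) by decide] at h
  · exact absurd h (EX hL1 h12 (by decide))

lemma chaseQm (hv : v ∈ S) (h12 : v + ofI m n (1,2) ∈ S)
    (h1m2 : v + ofI m n (1,-2) ∈ S) : False := by
  have h0 := mem_zero hv
  have h30 : v + ofI m n (3,0) ∈ S := by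
    obtain ⟨p, hp, h⟩ := L0' hL0 v (2,0)
    fin_cases hp
    · exact absurd h (EX hL1 h0 (by decide))
    · rwa [show ((2,0) : ℤ×ℤ) + (1,0) = (3,0) by decide] at h
    · exact absurd h (EX hL1 h0 (by decide))
    · exact absurd h (EX hL1 h12 (by decide))
    · exact absurd h (EX hL1 h1m2 (by decide))
  obtain ⟨p, hp, h⟩ := L0' hL0 v (2,1)
  fin_cases hp
  · exact absurd h (EX hL1 h12 (by decide))
  · exact absurd h (EX hL1 h30 (by decide))
  · exact absurd h (EX hL1 h0 (by decide))
  · exact absurd h (EX hL1 h12 (by decide))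
  · exact absurd h (EX hL1 h0 (by decide))

lemma chaseQ (hv : v ∈ S) (h12 : v + ofI m n (1,2) ∈ S) : v + ofI m n (2,-1) ∈ S := by
  have h0 := mem_zero hv
  obtain ⟨p, hp, h⟩ := L0' hL0 v (1,-1)
  fin_cases hp
  · exact absurd h (EX hL1 h0 (by decide))
  · rwa [show ((1,-1) : ℤ×ℤ) + (1,0) = (2,-1) by decide] at h
  · exact absurd h (EX hL1 h0 (by decide))
  · exact absurd h (EX hL1 h0 (by decide))
  · exact absurd (by rwa [show ((1,-1) : ℤ×ℤ) + (0,-1) = (1,-2) by decide] at h)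
      (fun hc => chaseQm hL0 hL1 hv h12 hc)

def Rp (S : Set (Fin m × Fin n)) (v : Fin m × Fin n) : Prop :=
  v ∈ S ∧ v + ofI m n (1,2) ∈ S

lemma Rstep1 (hR : Rp S v) : Rp S (v + ofI m n (1,2)) := by
  refine ⟨hR.2, ?_⟩
  rw [← add_ofI_assoc, show ((1,2) : ℤ×ℤ) + (1,2) = (2,4) by decide]
  exact chaseA2 hL0 hL1 hR.1 hR.2

lemma Rstep2 (hR : Rp S v) : Rp S (v + ofI m n (2,-1)) := by
  refine ⟨chaseQ hL0 hL1 hR.1 hR.2, ?_⟩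
  rw [← add_ofI_assoc, show ((2,-1) : ℤ×ℤ) + (1,2) = (3,1) by decide]
  exact chaseA1 hL0 hL1 hR.1 hR.2

lemma GENa (hR : Rp S v) : ∀ a : ℕ, Rp S (v + ofI m n ((a : ℤ), 2*a)) := by
  intro a
  induction a with
  | zero =>
      have e : (((0:ℕ) : ℤ), 2*((0:ℕ):ℤ)) = (0 : ℤ × ℤ) := by norm_num [Prod.ext_iff]
      rwa [e, ofI_zero, add_zero]
  | succ a ih =>
      have := Rstep1 hL0 hL1 ih
      rwa [← add_ofI_assoc,
        show (((a:ℤ), 2*(a:ℤ)) + (1,2) : ℤ×ℤ) = (((a+1:ℕ):ℤ), 2*((a+1:ℕ):ℤ)) by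
          rw [Prod.mk_add_mk, Prod.mk.injEq]; push_cast; exact ⟨by ring, by ring⟩] at this

lemma GEN (hR : Rp S v) (a b : ℕ) :
    Rp S (v + ofI m n ((a : ℤ) + 2*b, 2*(a:ℤ) - b)) := by
  induction b with
  | zero =>
      have := GENa hL0 hL1 hR a
      rwa [show (((a:ℤ), 2*(a:ℤ)) : ℤ×ℤ) = ((a:ℤ) + 2*((0:ℕ):ℤ), 2*(a:ℤ) - ((0:ℕ):ℤ)) by
        rw [Prod.mk.injEq]; push_cast; exact ⟨by ring, by ring⟩] at this
  | succ b ih =>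
      have := Rstep2 hL0 hL1 ih
      rwa [← add_ofI_assoc,
        show ((((a:ℤ) + 2*b, 2*(a:ℤ) - b) + (2,-1)) : ℤ×ℤ)
            = ((a:ℤ) + 2*((b+1:ℕ):ℤ), 2*(a:ℤ) - ((b+1:ℕ):ℤ)) by
          rw [Prod.mk_add_mk, Prod.mk.injEq]; push_cast; exact ⟨by ring, by ring⟩] at this

lemma GENZ (hR : Rp S v) (a b : ℤ) : v + ofI m n (a + 2*b, 2*a - b) ∈ S := by
  set k : ℕ := a.natAbs + b.natAbs with hk
  have ht : (1 : ℤ) ≤ (m : ℤ) * n := by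
    have hm' := Nat.pos_of_ne_zero (NeZero.ne m)
    have hn' := Nat.pos_of_ne_zero (NeZero.ne n)
    have : (1:ℤ) ≤ (m:ℤ) := by exact_mod_cast hm'
    have h2 : (1:ℤ) ≤ (n:ℤ) := by exact_mod_cast hn'
    nlinarith
  have hkt : (k : ℤ) ≤ (k : ℤ) * ((m:ℤ) * n) :=
    le_mul_of_one_le_right (by positivity) ht
  have hA : 0 ≤ a + (k : ℤ) * ((m:ℤ) * n) := by
    have h1 : -a ≤ (a.natAbs : ℤ) := by omega
    have h2 : (a.natAbs : ℤ) ≤ (k : ℤ) := by omega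
    linarith
  have hB : 0 ≤ b + (k : ℤ) * ((m:ℤ) * n) := by
    have h1 : -b ≤ (b.natAbs : ℤ) := by omega
    have h2 : (b.natAbs : ℤ) ≤ (k : ℤ) := by omega
    linarith
  set A : ℤ := a + (k : ℤ) * ((m:ℤ) * n) with hAdef
  set B : ℤ := b + (k : ℤ) * ((m:ℤ) * n) with hBdef
  have hmem := (GEN hL0 hL1 hR A.toNat B.toNat).1
  rw [Int.toNat_of_nonneg hA, Int.toNat_of_nonneg hB] at hmem
  have e : ofI m n (A + 2*B, 2*A - B) = ofI m n (a + 2*b, 2*a - b) := by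
    rw [ofI, ofI, Prod.ext_iff]
    constructor
    · exact (CharP.intCast_eq_intCast (Fin m) m).mpr
        (Int.ModEq.symm (Int.modEq_iff_dvd.mpr ⟨3 * k * n, by rw [hAdef, hBdef]; push_cast; ring⟩))
    · exact (CharP.intCast_eq_intCast (Fin n) n).mpr
        (Int.ModEq.symm (Int.modEq_iff_dvd.mpr ⟨k * m, by rw [hAdef, hBdef]; push_cast; ring⟩))
  rwa [e] at hmem

end Chase
end TG
namespace TG
section Final
variable {m n : ℕ} [NeZero m] [NeZero n] {S : Set (Fin m × Fin n)}
variable (hL0 : ∀ v, ∃ p ∈ plus5, v + ofI m n p ∈ S)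
variable (hL1 : ∀ v ∈ S, ∀ p ∈ D12, v + ofI m n p ∉ S)
variable {v : Fin m × Fin n}
include hL0 hL1

lemma FINAL_M (hR : Rp S v) (h5 : ¬ (5 ∣ m)) : False := by
  have hv := hR.1
  have hq : m = 5 * (m / 5) + m % 5 := (Nat.div_add_mod m 5).symm
  set q := m / 5 with hqdef
  set r := m % 5 with hrdef
  have hr : r = 1 ∨ r = 2 ∨ r = 3 ∨ r = 4 := by
    have h1 : r < 5 := Nat.mod_lt _ (by norm_num)
    have h2 : r ≠ 0 := fun h => h5 (Nat.dvd_of_mod_eq_zero h)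
    omega
  have hit : ∀ j : ℤ, ((0:ℤ), j) ∈ D12 → v + ofI m n ((m:ℤ), j) ∈ S → False := by
    intro j hj hmem
    have e : ofI m n ((m:ℤ), j) = ofI m n (0, j) := by
      rw [ofI, ofI, Prod.ext_iff]
      exact ⟨by simp, rfl⟩
    rw [e] at hmem
    exact hL1 v hv (0, j) hj hmem
  rcases hr with h|h|h|h
  · refine hit 2 (by decide) ?_
    have := GENZ hL0 hL1 hR ((q:ℤ)+1) (2*q)
    rwa [show ((((q:ℤ)+1) + 2*(2*(q:ℤ)), 2*((q:ℤ)+1) - 2*(q:ℤ)) : ℤ×ℤ) = ((m:ℤ), 2) by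
      rw [Prod.mk.injEq]; exact ⟨by omega, by ring⟩] at this
  · refine hit (-1) (by decide) ?_
    have := GENZ hL0 hL1 hR (q:ℤ) (2*q+1)
    rwa [show (((q:ℤ) + 2*(2*(q:ℤ)+1), 2*(q:ℤ) - (2*(q:ℤ)+1)) : ℤ×ℤ) = ((m:ℤ), -1) by
      rw [Prod.mk.injEq]; exact ⟨by omega, by ring⟩] at this
  · refine hit 1 (by decide) ?_
    have := GENZ hL0 hL1 hR ((q:ℤ)+1) (2*q+1)
    rwa [show ((((q:ℤ)+1) + 2*(2*(q:ℤ)+1), 2*((q:ℤ)+1) - (2*(q:ℤ)+1)) : ℤ×ℤ) = ((m:ℤ), 1) by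
      rw [Prod.mk.injEq]; exact ⟨by omega, by ring⟩] at this
  · refine hit (-2) (by decide) ?_
    have := GENZ hL0 hL1 hR (q:ℤ) (2*q+2)
    rwa [show (((q:ℤ) + 2*(2*(q:ℤ)+2), 2*(q:ℤ) - (2*(q:ℤ)+2)) : ℤ×ℤ) = ((m:ℤ), -2) by
      rw [Prod.mk.injEq]; exact ⟨by omega, by ring⟩] at this

lemma FINAL_N (hR : Rp S v) (h5 : ¬ (5 ∣ n)) : False := by
  have hv := hR.1
  have hq : n = 5 * (n / 5) + n % 5 := (Nat.div_add_mod n 5).symm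
  set q := n / 5 with hqdef
  set r := n % 5 with hrdef
  have hr : r = 1 ∨ r = 2 ∨ r = 3 ∨ r = 4 := by
    have h1 : r < 5 := Nat.mod_lt _ (by norm_num)
    have h2 : r ≠ 0 := fun h => h5 (Nat.dvd_of_mod_eq_zero h)
    omega
  have hit : ∀ i : ℤ, ((i:ℤ), (0:ℤ)) ∈ D12 → v + ofI m n (i, (n:ℤ)) ∈ S → False := by
    intro i hi hmem
    have e : ofI m n (i, (n:ℤ)) = ofI m n (i, 0) := by
      rw [ofI, ofI, Prod.ext_iff]
      exact ⟨rfl, by simp⟩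
    rw [e] at hmem
    exact hL1 v hv (i, 0) hi hmem
  rcases hr with h|h|h|h
  · refine hit (-2) (by decide) ?_
    have := GENZ hL0 hL1 hR (2*(q:ℤ)) (-((q:ℤ)+1))
    rwa [show ((2*(q:ℤ) + 2*(-((q:ℤ)+1)), 2*(2*(q:ℤ)) - (-((q:ℤ)+1))) : ℤ×ℤ) = ((-2 : ℤ), (n:ℤ)) by
      rw [Prod.mk.injEq]; exact ⟨by ring, by omega⟩] at this
  · refine hit 1 (by decide) ?_
    have := GENZ hL0 hL1 hR (2*(q:ℤ)+1) (-(q:ℤ))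
    rwa [show ((2*(q:ℤ)+1 + 2*(-(q:ℤ)), 2*(2*(q:ℤ)+1) - (-(q:ℤ))) : ℤ×ℤ) = ((1 : ℤ), (n:ℤ)) by
      rw [Prod.mk.injEq]; exact ⟨by ring, by omega⟩] at this
  · refine hit (-1) (by decide) ?_
    have := GENZ hL0 hL1 hR (2*(q:ℤ)+1) (-((q:ℤ)+1))
    rwa [show ((2*(q:ℤ)+1 + 2*(-((q:ℤ)+1)), 2*(2*(q:ℤ)+1) - (-((q:ℤ)+1))) : ℤ×ℤ) = ((-1 : ℤ), (n:ℤ)) by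
      rw [Prod.mk.injEq]; exact ⟨by ring, by omega⟩] at this
  · refine hit 2 (by decide) ?_
    have := GENZ hL0 hL1 hR (2*(q:ℤ)+2) (-(q:ℤ))
    rwa [show ((2*(q:ℤ)+2 + 2*(-(q:ℤ)), 2*(2*(q:ℤ)+2) - (-(q:ℤ))) : ℤ×ℤ) = ((2 : ℤ), (n:ℤ)) by
      rw [Prod.mk.injEq]; exact ⟨by ring, by omega⟩] at this

lemma keyA (hv : v ∈ S) (h12 : v + ofI m n (1,2) ∈ S) : 5 ∣ m ∧ 5 ∣ n := by
  constructor
  · by_contra h5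
    exact FINAL_M hL0 hL1 ⟨hv, h12⟩ h5
  · by_contra h5
    exact FINAL_N hL0 hL1 ⟨hv, h12⟩ h5

lemma key (hS : ∃ w, w ∈ S) : 5 ∣ m ∧ 5 ∣ n := by
  obtain ⟨v, hv⟩ := hS
  rcases dich hL0 hL1 hv with h12 | h21
  · exact keyA hL0 hL1 hv h12
  · set S' : Set (Fin n × Fin m) := {w | (w.2, w.1) ∈ S} with hS'
    have swap_plus : ∀ p ∈ plus5, ((p.2, p.1) : ℤ×ℤ) ∈ plus5 := by decide
    have swap_D12 : ∀ p ∈ D12, ((p.2, p.1) : ℤ×ℤ) ∈ D12 := by decide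
    have swap_mem : ∀ (w : Fin n × Fin m) (p : ℤ × ℤ),
        w + ofI n m p ∈ S' ↔ (w.2, w.1) + ofI m n (p.2, p.1) ∈ S := fun w p => Iff.rfl
    have hL0' : ∀ w, ∃ p ∈ plus5, w + ofI n m p ∈ S' := by
      intro w
      obtain ⟨p, hp, h⟩ := hL0 (w.2, w.1)
      refine ⟨(p.2, p.1), swap_plus p hp, ?_⟩
      rw [swap_mem]
      simpa using h
    have hL1' : ∀ w ∈ S', ∀ p ∈ D12, w + ofI n m p ∉ S' := by
      intro w hw p hp hcon
      rw [swap_mem] at hcon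
      exact hL1 (w.2, w.1) hw (p.2, p.1) (swap_D12 p hp) hcon
    have hv' : (v.2, v.1) ∈ S' := by simpa [hS'] using hv
    have h12' : (v.2, v.1) + ofI n m (1,2) ∈ S' := by
      rw [swap_mem]
      simpa using h21
    have := keyA hL0' hL1' hv' h12'
    exact ⟨this.2, this.1⟩

end Final

lemma necessity {m n : ℕ} [NeZero m] [NeZero n] (hm : 3 ≤ m) (hn : 3 ≤ n)
    (hcol : (toroidalGrid m n).square.Colorable 5) : 5 ∣ m ∧ 5 ∣ n := by
  obtain ⟨C⟩ := hcol
  classical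
  set S : Set (Fin m × Fin n) := {w | C w = C 0} with hSdef
  have hL1 : ∀ v ∈ S, ∀ p ∈ D12, v + ofI m n p ∉ S := by
    intro v hv p hp hmem
    have hne : v + ofI m n p ≠ v := by
      intro h
      refine ofI_ne_zero hm hn p hp ?_
      have : v + ofI m n p = v + 0 := by rw [add_zero]; exact h
      exact add_left_cancel this
    have hadj : (toroidalGrid m n).square.Adj (v + ofI m n p) v :=
      (square_adj hm hn).mpr ⟨hne, p, hp, rfl⟩
    simp only [hSdef, Set.mem_setOf_eq] at hv hmem
    exact C.valid hadj (hmem.trans hv.symm)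
  have hL0 : ∀ w, ∃ p ∈ plus5, w + ofI m n p ∈ S := by
    intro w
    let g : Fin 5 → ℤ × ℤ := ![(0,0),(1,0),(-1,0),(0,1),(0,-1)]
    have hg : ∀ i, g i ∈ plus5 := by decide
    have hginj : Function.Injective g := by decide
    have hFinj : Function.Injective (fun i => C (w + ofI m n (g i))) := by
      intro i j hij
      by_contra hne
      exact C.valid (plus_adj hm hn w (hg i) (hg j) (fun e => hne (hginj e))) hij
    obtain ⟨i, hi⟩ := Finite.injective_iff_surjective.mp hFinj (C 0)
    exact ⟨g i, hg i, hi⟩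
  exact key hL0 hL1 ⟨0, rfl⟩

end TG
namespace TG

lemma lower {m n : ℕ} [NeZero m] [NeZero n] (hm : 3 ≤ m) (hn : 3 ≤ n) :
    5 ≤ (toroidalGrid m n).square.chromaticNumber := by
  classical
  let g : Fin 5 → ℤ × ℤ := ![(0,0),(1,0),(-1,0),(0,1),(0,-1)]
  have hg : ∀ i, g i ∈ plus5 := by decide
  have hginj : Function.Injective g := by decide
  let f : Fin 5 → Fin m × Fin n := fun i => 0 + ofI m n (g i)
  have hfinj : Function.Injective f := by
    intro i j h
    by_contra hne
    exact plus_ne hm hn 0 (hg i) (hg j) (fun e => hne (hginj e)) h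
  have hclique : (toroidalGrid m n).square.IsClique (↑(Finset.univ.image f)) := by
    rintro x hx y hy hxy
    simp only [Finset.coe_image, Finset.coe_univ, Set.image_univ, Set.mem_range] at hx hy
    obtain ⟨i, rfl⟩ := hx
    obtain ⟨j, rfl⟩ := hy
    exact plus_adj hm hn 0 (hg i) (hg j) (fun e => hxy (congrArg (fun d => 0 + ofI m n d) e))
  have hcard : (Finset.univ.image f).card = 5 := by
    rw [Finset.card_image_of_injective _ hfinj, Finset.card_univ, Fintype.card_fin]
  have h := hclique.card_le_chromaticNumber
  rw [hcard] at h
  exact_mod_cast h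

end TG


open TG in
theorem stmt12 (m n : ℕ) (hm : 3 ≤ m) (hn : 3 ≤ n) :
    5 ≤ (toroidalGrid m n).square.chromaticNumber ∧
    ((toroidalGrid m n).square.chromaticNumber = 5 ↔ m % 5 = 0 ∧ n % 5 = 0) := by
  haveI : NeZero m := ⟨by omega⟩
  haveI : NeZero n := ⟨by omega⟩
  refine ⟨lower hm hn, ?_, ?_⟩
  · intro h5
    have h := SimpleGraph.colorable_chromaticNumber_of_fintype (toroidalGrid m n).square
    rw [h5] at h
    have h' : (toroidalGrid m n).square.Colorable 5 := by simpa using h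
    have := necessity hm hn h'
    omega
  · rintro ⟨hm5, hn5⟩
    have h5m : 5 ∣ m := Nat.dvd_of_mod_eq_zero hm5
    have h5n : 5 ∣ n := Nat.dvd_of_mod_eq_zero hn5
    let C : (toroidalGrid m n).square.Coloring (ZMod 5) :=
      SimpleGraph.Coloring.mk (colorFun hm hn h5m h5n)
        (fun h => color_valid hm hn h5m h5n h)
    have hcol : (toroidalGrid m n).square.Colorable 5 := by
      have := C.colorable
      rwa [show Fintype.card (ZMod 5) = 5 by simp] at this
    have hle := hcol.chromaticNumber_le
    refine le_antisymm ?_ (lower hm hn)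
    exact_mod_cast hle
end

section
/- For every integer n ≥ 3, the independence number of the square of T_{3,n} = C_3 □ C_n satisfies α(T_{3,n}²) ≤ ⌊n/2⌋. -/
open SimpleGraph

/-- An independent set in `C_n` (n ≥ 3) has at most `⌊n/2⌋` elements. -/
lemma indep_cycle_card {n : ℕ} (hn : 3 ≤ n) (S : Finset (Fin n))
    (h : ∀ x ∈ S, ∀ y ∈ S, x ≠ y → ¬(cycleGraph n).Adj x y) : S.card ≤ n / 2 := by
  have hpos : 0 < n := by omega
  have : NeZero n := ⟨by omega⟩
  have honev : ((1 : Fin n) : ℕ) = 1 := by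
    simp [Fin.val_one', Nat.mod_eq_of_lt (show 1 < n by omega)]
  have key : 2 * S.card ≤ n := by
    have hdisj : Disjoint S (S.image (· + 1)) := by
      rw [Finset.disjoint_left]
      intro x hxS hxT
      obtain ⟨y, hyS, hyx⟩ := Finset.mem_image.mp hxT
      have hne : y ≠ x := by
        intro he
        rw [he] at hyx
        have hv := congrArg Fin.val hyx
        rw [Fin.val_add, honev] at hv
        rcases Nat.lt_or_ge (x.val + 1) n with hlt | hge
        · rw [Nat.mod_eq_of_lt hlt] at hv; omega
        · have hx : x.val + 1 = n := by omega
          rw [hx, Nat.mod_self] at hv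
          omega
      apply h y hyS x hxS hne
      rw [cycleGraph_adj', ← hyx]
      right
      rw [add_sub_cancel_left]
      exact honev
    have hinj : Set.InjOn (· + 1) (S : Set (Fin n)) := fun a _ b _ hab => by
      simpa using hab
    have hcardT : (S.image (· + 1)).card = S.card := Finset.card_image_of_injOn hinj
    have := Finset.card_union_of_disjoint hdisj
    have hle : (S ∪ S.image (· + 1)).card ≤ n := by
      simpa using Finset.card_le_card (Finset.subset_univ (S ∪ S.image (· + 1)))
    omega
  omega

theorem stmt13 (n : ℕ) (hn : 3 ≤ n) :
    (toroidalGrid 3 n).square.indepNum' ≤ n / 2 := by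
  unfold SimpleGraph.indepNum' SimpleGraph.cliqueNum
  have hne : {k | ∃ s, ((toroidalGrid 3 n).square)ᶜ.IsNClique k s}.Nonempty :=
    ⟨0, ∅, isNClique_empty.mpr rfl⟩
  apply csSup_le hne
  rintro k ⟨s, hclique, hcard⟩
  -- non-adjacency facts for members of s
  have hno : ∀ u ∈ s, ∀ v ∈ s, u ≠ v → ¬(toroidalGrid 3 n).square.Adj u v := by
    intro u hu v hv huv
    have := hclique hu hv huv
    rw [compl_adj] at this
    exact this.2
  have hC3 : ∀ (a b : Fin 3), a ≠ b → (cycleGraph 3).Adj a b := by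
    intro a b hab
    rw [cycleGraph_three_eq_top]
    exact hab
  -- any two distinct members of s are square-adjacent if columns equal or cycle-adjacent
  have hsq : ∀ u ∈ s, ∀ v ∈ s, u ≠ v →
      u.2 ≠ v.2 ∧ ¬(cycleGraph n).Adj u.2 v.2 := by
    intro u hu v hv huv
    constructor
    · intro he
      have h1 : u.1 ≠ v.1 := fun h1 => huv (Prod.ext h1 he)
      exact hno u hu v hv huv ⟨huv, Or.inl (Or.inl ⟨hC3 _ _ h1, he⟩)⟩
    · intro hadj
      apply hno u hu v hv huv
      refine ⟨huv, ?_⟩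
      by_cases h1 : u.1 = v.1
      · exact Or.inl (Or.inr ⟨hadj, h1⟩)
      · refine Or.inr ⟨(v.1, u.2), Or.inl ⟨hC3 _ _ h1, rfl⟩, Or.inr ⟨hadj, rfl⟩⟩
  -- project to columns
  have hinj : Set.InjOn Prod.snd (s : Set (Fin 3 × Fin n)) := by
    intro u hu v hv he
    by_contra huv
    exact (hsq u hu v hv huv).1 he
  have hcardim : (s.image Prod.snd).card = k := by
    rw [Finset.card_image_of_injOn hinj, hcard]
  rw [← hcardim]
  apply indep_cycle_card hn
  intro x hx y hy hxy hadj
  obtain ⟨u, hu, hux⟩ := Finset.mem_image.mp hx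
  obtain ⟨v, hv, hvy⟩ := Finset.mem_image.mp hy
  have huv : u ≠ v := fun he => hxy (hux ▸ hvy ▸ he ▸ rfl)
  exact (hsq u hu v hv huv).2 (hux ▸ hvy ▸ hadj)
end

section
/- For every integer n ≥ 3, the independence number of the square of T_{4,n} = C_4 □ C_n satisfies α(T_{4,n}²) ≤ ⌊2n/3⌋. -/
open SimpleGraph

theorem stmt14 (n : ℕ) (hn : 3 ≤ n) :
    (toroidalGrid 4 n).square.indepNum' ≤ 2 * n / 3 := by
  haveI : NeZero n := ⟨by omega⟩
  classical
  have hcyc : ∀ j : Fin n, (cycleGraph n).Adj j (j + 1) := by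
    intro j
    rw [cycleGraph_adj']
    right
    rw [add_sub_cancel_left, Fin.val_one']
    exact Nat.mod_eq_of_lt (by omega)
  have hne1 : ∀ j : Fin n, j ≠ j + 1 := by
    intro j h
    rw [left_eq_add, Fin.ext_iff, Fin.val_one', Fin.val_zero,
      Nat.mod_eq_of_lt (by omega)] at h
    omega
  have hne2 : ∀ j : Fin n, j ≠ j + 1 + 1 := by
    intro j h
    rw [add_assoc, left_eq_add, Fin.ext_iff, Fin.val_add, Fin.val_one', Fin.val_zero,
      Nat.mod_eq_of_lt (a := 1) (by omega), Nat.mod_eq_of_lt (by omega)] at h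
    omega
  have d1 : ∀ a b : Fin 4, a ≠ b → ¬(cycleGraph 4).Adj a b → b = a + 2 := by decide
  have d2 : ∀ a : Fin 4, (cycleGraph 4).Adj a (a + 1) := by decide
  have d3 : ∀ a : Fin 4, (cycleGraph 4).Adj (a + 1) (a + 2) := by decide
  have d4 : ∀ a : Fin 4, a + 2 + 2 = a := by decide
  have sqA : ∀ (a b : Fin 4) (j : Fin n), a ≠ b →
      (toroidalGrid 4 n).square.Adj (a, j) (b, j) := by
    intro a b j hab
    refine ⟨by simp [Prod.ext_iff, hab], ?_⟩
    by_cases h : (cycleGraph 4).Adj a b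
    · exact Or.inl (boxProd_adj.mpr (Or.inl ⟨h, rfl⟩))
    · refine Or.inr ⟨(a + 1, j), boxProd_adj.mpr (Or.inl ⟨d2 a, rfl⟩), ?_⟩
      rw [d1 a b hab h]
      exact boxProd_adj.mpr (Or.inl ⟨d3 a, rfl⟩)
  have sqB : ∀ (a b : Fin 4) (j : Fin n), b ≠ a + 2 →
      (toroidalGrid 4 n).square.Adj (a, j) (b, j + 1) := by
    intro a b j hab
    refine ⟨fun h => hne1 j (congrArg Prod.snd h), ?_⟩
    by_cases h : a = b
    · exact Or.inl (boxProd_adj.mpr (Or.inr ⟨hcyc j, h⟩))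
    · have hadj : (cycleGraph 4).Adj a b := by
        by_contra hcon
        exact hab (d1 a b h hcon)
      exact Or.inr ⟨(b, j), boxProd_adj.mpr (Or.inl ⟨hadj, rfl⟩),
        boxProd_adj.mpr (Or.inr ⟨hcyc j, rfl⟩)⟩
  have sqC : ∀ (a : Fin 4) (j : Fin n),
      (toroidalGrid 4 n).square.Adj (a, j) (a, j + 1 + 1) := by
    intro a j
    exact ⟨fun h => hne2 j (congrArg Prod.snd h),
      Or.inr ⟨(a, j + 1), boxProd_adj.mpr (Or.inr ⟨hcyc j, rfl⟩),
        boxProd_adj.mpr (Or.inr ⟨hcyc (j + 1), rfl⟩)⟩⟩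
  rw [SimpleGraph.indepNum', SimpleGraph.cliqueNum]
  have hnonempty : {k | ∃ s, ((toroidalGrid 4 n).square)ᶜ.IsNClique k s}.Nonempty :=
    ⟨0, ∅, by simp⟩
  apply csSup_le hnonempty
  rintro k ⟨S, hS⟩
  rw [← hS.card_eq]
  have hind : ∀ u ∈ S, ∀ v ∈ S, (toroidalGrid 4 n).square.Adj u v → False := by
    intro u hu v hv hadj
    exact (hS.1 hu hv hadj.ne).2 hadj
  have hinj : Set.InjOn Prod.snd (↑S : Set (Fin 4 × Fin n)) := by
    intro u hu v hv h
    by_contra hne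
    have hfst : u.1 ≠ v.1 := fun h1 => hne (Prod.ext h1 h)
    exact hind u hu v hv (by
      rw [← Prod.mk.eta (p := u), ← Prod.mk.eta (p := v), ← h]
      exact sqA u.1 v.1 u.2 hfst)
  set J := S.image Prod.snd with hJ
  have hcard : S.card = J.card := (Finset.card_image_of_injOn hinj).symm
  have hD : ∀ j : Fin n, ¬(j ∈ J ∧ j + 1 ∈ J ∧ j + 1 + 1 ∈ J) := by
    rintro j ⟨h0, h1, h2⟩
    obtain ⟨u, hu, hu2⟩ := Finset.mem_image.mp h0
    obtain ⟨v, hv, hv2⟩ := Finset.mem_image.mp h1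
    obtain ⟨w, hw, hw2⟩ := Finset.mem_image.mp h2
    have hb : v.1 = u.1 + 2 := by
      by_contra hcon
      exact hind u hu v hv (by
        rw [← Prod.mk.eta (p := u), ← Prod.mk.eta (p := v), hu2, hv2]
        exact sqB u.1 v.1 j hcon)
    have hc : w.1 = v.1 + 2 := by
      by_contra hcon
      exact hind v hv w hw (by
        rw [← Prod.mk.eta (p := v), ← Prod.mk.eta (p := w), hv2, hw2]
        exact sqB v.1 w.1 (j + 1) hcon)
    have hwa : w.1 = u.1 := by rw [hc, hb]; exact d4 u.1
    exact hind u hu w hw (by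
      rw [← Prod.mk.eta (p := u), ← Prod.mk.eta (p := w), hu2, hw2, hwa]
      exact sqC u.1 j)
  set f : Fin n → ℕ := fun j => if j ∈ J then 1 else 0 with hf
  have h1 : ∑ j : Fin n, f j = J.card := by
    simp only [hf]
    rw [Finset.sum_ite_mem, Finset.univ_inter, Finset.card_eq_sum_ones]
  have hshift : ∀ c : Fin n, ∑ j : Fin n, f (j + c) = ∑ j : Fin n, f j :=
    fun c => Fintype.sum_equiv (Equiv.addRight c) _ _ (fun j => rfl)
  have e2 : ∑ j : Fin n, f (j + 1) = J.card := by rw [hshift 1, h1]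
  have e3 : ∑ j : Fin n, f (j + 1 + 1) = J.card := by
    simp_rw [add_assoc]
    rw [hshift (1 + 1), h1]
  have step : ∀ j : Fin n, f j + f (j + 1) + f (j + 1 + 1) ≤ 2 := by
    intro j
    have := hD j
    simp only [hf]
    split_ifs with ha hb hc
    · exact absurd ⟨ha, hb, hc⟩ this
    all_goals simp
  have hbound : 3 * J.card ≤ 2 * n := by
    calc 3 * J.card
        = ∑ j : Fin n, f j + ∑ j : Fin n, f (j + 1) + ∑ j : Fin n, f (j + 1 + 1) := by
          rw [h1, e2, e3]; ring
      _ = ∑ j : Fin n, (f j + f (j + 1) + f (j + 1 + 1)) := by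
          rw [Finset.sum_add_distrib, Finset.sum_add_distrib]
      _ ≤ ∑ _j : Fin n, 2 := Finset.sum_le_sum fun j _ => step j
      _ = 2 * n := by simp [Finset.sum_const, mul_comm]
  rw [hcard]
  omega
end

section
/- For every integer n ≥ 5, the independence number of the square of T_{5,n} = C_5 □ C_n satisfies α(T_{5,n}²) ≤ n; moreover, if n is not a multiple of 5 then α(T_{5,n}²) < n. -/
open SimpleGraph

open Fin.NatCast Fin.CommRing

private lemma add_one_add_one (m : ℕ) (j : Fin (m+5)) : j + (1 + 1) = j + 2 := by ring

private lemma c5_cover : ∀ a b : Fin 5, a ≠ b →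
    (cycleGraph 5).Adj a b ∨ ∃ c, (cycleGraph 5).Adj a c ∧ (cycleGraph 5).Adj c b := by decide

private lemma c5_step : ∀ a b : Fin 5, a ≠ b → ¬(cycleGraph 5).Adj a b →
    (b - a = 2 ∨ b - a = 3) := by decide

private lemma fin5_eq : ∀ a b : Fin 5, (a = 2 ∨ a = 3) → (b = 2 ∨ b = 3) → a + b ≠ 0 →
    b = a := by decide

private lemma fin5_mul : ∀ x d : Fin 5, (d = 2 ∨ d = 3) → x * d = 0 → x = 0 := by decide

private lemma ne_add_one (m : ℕ) (j : Fin (m+5)) : j ≠ j + 1 := by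
  intro h
  have h0 := congrArg (· - j) h
  simp only [sub_self, add_sub_cancel_left] at h0
  have h1 := congrArg Fin.val h0
  rw [Fin.val_zero, Fin.val_one] at h1
  omega

private lemma ne_add_two (m : ℕ) (j : Fin (m+5)) : j ≠ j + 2 := by
  intro h
  have h0 := congrArg (· - j) h
  simp only [sub_self, add_sub_cancel_left] at h0
  have h1 := congrArg Fin.val h0
  have h2 : (2 : Fin (m+5)).val = 2 := by
    show 2 % (m+5) = 2
    exact Nat.mod_eq_of_lt (by omega)
  rw [Fin.val_zero, h2] at h1
  omega

private lemma cn_adj_succ (m : ℕ) (j : Fin (m+5)) : (cycleGraph (m+5)).Adj j (j+1) := by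
  rw [cycleGraph_adj']
  right
  rw [add_sub_cancel_left]
  exact Fin.val_one _

/-- Two distinct vertices in the same column are adjacent in the square. -/
private lemma same_col (m : ℕ) (a b : Fin 5) (j : Fin (m+5)) (hab : a ≠ b) :
    (toroidalGrid 5 (m+5)).square.Adj (a, j) (b, j) := by
  refine ⟨by simp [Prod.ext_iff, hab], ?_⟩
  rcases c5_cover a b hab with h | ⟨c, h1, h2⟩
  · exact Or.inl (Or.inl ⟨h, rfl⟩)
  · exact Or.inr ⟨(c, j), Or.inl ⟨h1, rfl⟩, Or.inl ⟨h2, rfl⟩⟩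

/-- Non-adjacency in the square across consecutive columns forces a row shift of ±2. -/
private lemma step_lemma (m : ℕ) (a b : Fin 5) (j : Fin (m+5))
    (h : ¬(toroidalGrid 5 (m+5)).square.Adj (a, j) (b, j+1)) :
    b - a = 2 ∨ b - a = 3 := by
  have hne : (a, j) ≠ (b, j+1) := by
    intro he
    exact (ne_add_one m j) (congrArg Prod.snd he)
  have hcn : (cycleGraph (m+5)).Adj j (j+1) := cn_adj_succ m j
  have hab : a ≠ b := by
    intro he; subst he
    exact h ⟨hne, Or.inl (Or.inr ⟨hcn, rfl⟩)⟩
  have hnadj : ¬(cycleGraph 5).Adj a b := by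
    intro hadj
    exact h ⟨hne, Or.inr ⟨(b, j), Or.inl ⟨hadj, rfl⟩, Or.inr ⟨hcn, rfl⟩⟩⟩
  exact c5_step a b hab hnadj

/-- Non-adjacency in the square across columns at distance two forces distinct rows. -/
private lemma two_step_lemma (m : ℕ) (a b : Fin 5) (j : Fin (m+5))
    (h : ¬(toroidalGrid 5 (m+5)).square.Adj (a, j) (b, j+1+1)) :
    a ≠ b := by
  intro he; subst he
  have hne : (a, j) ≠ (a, j+1+1) := by
    intro he'
    have : j = j + 2 := by
      have : j = j + 1 + 1 := congrArg Prod.snd he'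
      rw [add_assoc, add_one_add_one] at this
      exact this
    exact (ne_add_two m j) this
  exact h ⟨hne, Or.inr ⟨(a, j+1), Or.inr ⟨cn_adj_succ m j, rfl⟩,
    Or.inr ⟨cn_adj_succ m (j+1), rfl⟩⟩⟩

private lemma indep_main (m : ℕ) (s : Finset (Fin 5 × Fin (m+5)))
    (hs : ((toroidalGrid 5 (m+5)).square)ᶜ.IsClique s) :
    s.card ≤ m+5 ∧ ((m+5) % 5 ≠ 0 → s.card ≠ m+5) := by
  have hind : ∀ u ∈ s, ∀ v ∈ s, u ≠ v → ¬(toroidalGrid 5 (m+5)).square.Adj u v := by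
    intro u hu v hv huv
    exact ((hs (Finset.mem_coe.2 hu) (Finset.mem_coe.2 hv) huv)).2
  -- the second projection is injective on s
  have hinj : Set.InjOn (Prod.snd : Fin 5 × Fin (m+5) → Fin (m+5)) ↑s := by
    intro u hu v hv he
    by_contra hne
    have hfst : u.1 ≠ v.1 := by
      intro h1; exact hne (Prod.ext h1 he)
    have := same_col m u.1 v.1 u.2 hfst
    rw [show (v.1, u.2) = v from Prod.ext rfl he] at this
    exact hind u (Finset.mem_coe.1 hu) v (Finset.mem_coe.1 hv) hne this
  have hcard : s.card ≤ m+5 := by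
    have := Finset.card_le_card_of_injOn Prod.snd (fun a _ => Finset.mem_univ a.2)
      (fun u hu v hv => hinj (Finset.mem_coe.2 hu) (Finset.mem_coe.2 hv))
    simpa using this
  refine ⟨hcard, fun h5 hceq => ?_⟩
  -- s has exactly one vertex in every column; extract the row function r
  have himg : s.image Prod.snd = Finset.univ := by
    apply Finset.eq_univ_of_card
    rw [Finset.card_image_of_injOn
      (fun u hu v hv => hinj (Finset.mem_coe.2 hu) (Finset.mem_coe.2 hv)), hceq]
    simp
  have hr : ∀ j : Fin (m+5), ∃ a : Fin 5, (a, j) ∈ s := by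
    intro j
    have : j ∈ s.image Prod.snd := himg ▸ Finset.mem_univ j
    obtain ⟨p, hp, hpj⟩ := Finset.mem_image.1 this
    exact ⟨p.1, by rwa [show (p.1, j) = p from Prod.ext rfl hpj.symm]⟩
  choose r hrmem using hr
  -- consecutive differences
  set d : Fin (m+5) → Fin 5 := fun j => r (j+1) - r j with hd
  have hnadj : ∀ (j k : Fin (m+5)), j ≠ k → ¬(toroidalGrid 5 (m+5)).square.Adj (r j, j) (r k, k) := by
    intro j k hjk
    exact hind _ (hrmem j) _ (hrmem k) (by simp [Prod.ext_iff, hjk])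
  have hdval : ∀ j, d j = 2 ∨ d j = 3 := by
    intro j
    exact step_lemma m (r j) (r (j+1)) j (hnadj j (j+1) (ne_add_one m j))
  have hdstep : ∀ j, d (j+1) = d j := by
    intro j
    have hne2 : r j ≠ r (j+1+1) := two_step_lemma m (r j) (r (j+1+1)) j
      (hnadj j (j+1+1) (by
        intro h
        exact (ne_add_two m j) (by rw [add_assoc, add_one_add_one] at h; exact h)))
    have hsum : d j + d (j+1) ≠ 0 := by
      intro h0
      apply hne2
      have : r (j+1+1) = r j + (d j + d (j+1)) := by
        simp only [hd]
        ring
      rw [h0, add_zero] at this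
      exact this.symm
    exact fin5_eq (d j) (d (j+1)) (hdval j) (hdval (j+1)) hsum
  -- all differences equal d 0, so r is an arithmetic progression
  have hdall : ∀ k : ℕ, d (k : Fin (m+5)) = d 0 := by
    intro k
    induction k with
    | zero => simp
    | succ k ih =>
      have : ((k+1 : ℕ) : Fin (m+5)) = (k : Fin (m+5)) + 1 := by push_cast; ring
      rw [this, hdstep]
      exact ih
  have hrk : ∀ k : ℕ, r (k : Fin (m+5)) = r 0 + (k : Fin 5) * d 0 := by
    intro k
    induction k with
    | zero => simp
    | succ k ih =>
      have hc : ((k+1 : ℕ) : Fin (m+5)) = (k : Fin (m+5)) + 1 := by push_cast; ring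
      have : r ((k : Fin (m+5)) + 1) = r (k : Fin (m+5)) + d (k : Fin (m+5)) := by
        simp [hd]
      rw [hc, this, hdall, ih]
      push_cast
      ring
  have hn0 : ((m+5 : ℕ) : Fin (m+5)) = 0 := by
    exact_mod_cast Fin.natCast_self (m+5)
  have := hrk (m+5)
  rw [hn0] at this
  have hmul : ((m+5 : ℕ) : Fin 5) * d 0 = 0 := by
    have := left_eq_add.1 this
    exact this
  have hz : ((m+5 : ℕ) : Fin 5) = 0 := fin5_mul _ _ (hdval 0) hmul
  have := congrArg Fin.val hz
  rw [Fin.val_natCast, Fin.val_zero] at this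
  exact h5 this

theorem stmt15 (n : ℕ) (hn : 5 ≤ n) :
    (toroidalGrid 5 n).square.indepNum' ≤ n ∧
    (n % 5 ≠ 0 → (toroidalGrid 5 n).square.indepNum' < n) := by
  obtain ⟨m, rfl⟩ : ∃ m, n = m + 5 := ⟨n - 5, by omega⟩
  have hmain : ∀ s : Finset (Fin 5 × Fin (m+5)),
      ((toroidalGrid 5 (m+5)).square)ᶜ.IsClique s →
      s.card ≤ m+5 ∧ ((m+5) % 5 ≠ 0 → s.card ≠ m+5) := fun s hs => indep_main m s hs
  have hle : (toroidalGrid 5 (m+5)).square.indepNum' ≤ m+5 := by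
    unfold SimpleGraph.indepNum' SimpleGraph.cliqueNum
    have h0 : 0 ∈ {k | ∃ t, (((toroidalGrid 5 (m+5)).square)ᶜ).IsNClique k t} :=
      ⟨∅, by simp [isNClique_empty]⟩
    apply csSup_le ⟨0, h0⟩
    rintro k ⟨t, ht⟩
    rw [← ht.2]
    exact (hmain t ht.1).1
  refine ⟨hle, fun h5 => ?_⟩
  rcases lt_or_eq_of_le hle with h | h
  · exact h
  · exfalso
    obtain ⟨t, ht⟩ := ((toroidalGrid 5 (m+5)).square)ᶜ.exists_isNClique_cliqueNum
    have : t.card = m+5 := by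
      rw [ht.2]
      exact h
    exact (hmain t ht.1).2 h5 this
end

section
/- The independence number of the square of T_{5,7} = C_5 □ C_7 equals 5. -/
open SimpleGraph

/-! ### Auxiliary machinery -/

private def d5 (a b : Fin 5) : ℕ := min (a - b).val (b - a).val
private def d7 (a b : Fin 7) : ℕ := min (a - b).val (b - a).val

/-- Arithmetic description of adjacency in the square of `T_{5,7}`. -/
private def adjC (u v : Fin 5 × Fin 7) : Prop := u ≠ v ∧ d5 u.1 v.1 + d7 u.2 v.2 ≤ 2

private instance : ∀ u v, Decidable (adjC u v) := fun _ _ => inferInstanceAs (Decidable (_ ∧ _))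

private instance : DecidableRel (toroidalGrid 5 7).Adj := fun _ _ =>
  decidable_of_iff' _ (SimpleGraph.boxProd_adj (G := cycleGraph 5) (H := cycleGraph 7))

private instance : DecidableRel (toroidalGrid 5 7).square.Adj := fun _ _ =>
  inferInstanceAs (Decidable (_ ∧ _))

set_option maxRecDepth 40000 in
private lemma adjIff : ∀ u v : Fin 5 × Fin 7,
    (toroidalGrid 5 7).square.Adj u v ↔ adjC u v := by decide

private lemma colEqC : ∀ u v : Fin 5 × Fin 7, u ≠ v → u.2 = v.2 → adjC u v := by decide

private def conflictB (r d r' d' : ℕ) : Bool :=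
  (!(r == r' && d == d')) &&
    (min ((r+5-r')%5) ((r'+5-r)%5) + min ((d+7-d')%7) ((d'+7-d)%7) ≤ 2)

set_option maxRecDepth 40000 in
private lemma conflictB_adjC : ∀ (r r' : Fin 5) (d d' : Fin 7),
    conflictB r.val d.val r'.val d'.val = true → adjC (r, d) (r', d') := by decide

private def R5 : List ℕ := [0,1,2,3,4]

private lemma mem5 : ∀ r : Fin 5, r.val ∈ R5 := by decide

private def checkAll : Bool :=
  R5.all fun a =>
  (R5.all fun b =>
  conflictB a 0 b 1 || ((R5.all fun c =>
  conflictB a 0 c 2 || (conflictB b 1 c 2 || ((R5.all fun e =>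
  conflictB a 0 e 3 || (conflictB b 1 e 3 || (conflictB c 2 e 3 || ((R5.all fun f =>
  conflictB a 0 f 4 || (conflictB b 1 f 4 || (conflictB c 2 f 4 || (conflictB e 3 f 4 || ((R5.all fun g =>
  conflictB a 0 g 5 || (conflictB b 1 g 5 || (conflictB c 2 g 5 || (conflictB e 3 g 5 || (conflictB f 4 g 5)))))))))))))))))))

private lemma checkAll_true : checkAll = true := by decide

/-- Among any assignment of rows to the six columns `0,…,5` (column `6` being empty),
two of the chosen vertices are adjacent in the square. -/
private lemma key6 (h : Fin 7 → Fin 5) :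
    ∃ d d' : Fin 7, d ≠ 6 ∧ d' ≠ 6 ∧ adjC (h d, d) (h d', d') := by
  have H := checkAll_true
  rw [checkAll] at H
  simp only [List.all_eq_true, Bool.or_eq_true] at H
  have H := H _ (mem5 (h 0)) _ (mem5 (h 1))
  rcases H with H | H
  · exact ⟨0, 1, by decide, by decide, conflictB_adjC _ _ _ _ H⟩
  have H := H _ (mem5 (h 2))
  rcases H with H | H | H
  · exact ⟨0, 2, by decide, by decide, conflictB_adjC _ _ _ _ H⟩
  · exact ⟨1, 2, by decide, by decide, conflictB_adjC _ _ _ _ H⟩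
  have H := H _ (mem5 (h 3))
  rcases H with H | H | H | H
  · exact ⟨0, 3, by decide, by decide, conflictB_adjC _ _ _ _ H⟩
  · exact ⟨1, 3, by decide, by decide, conflictB_adjC _ _ _ _ H⟩
  · exact ⟨2, 3, by decide, by decide, conflictB_adjC _ _ _ _ H⟩
  have H := H _ (mem5 (h 4))
  rcases H with H | H | H | H | H
  · exact ⟨0, 4, by decide, by decide, conflictB_adjC _ _ _ _ H⟩
  · exact ⟨1, 4, by decide, by decide, conflictB_adjC _ _ _ _ H⟩
  · exact ⟨2, 4, by decide, by decide, conflictB_adjC _ _ _ _ H⟩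
  · exact ⟨3, 4, by decide, by decide, conflictB_adjC _ _ _ _ H⟩
  have H := H _ (mem5 (h 5))
  rcases H with H | H | H | H | H
  · exact ⟨0, 5, by decide, by decide, conflictB_adjC _ _ _ _ H⟩
  · exact ⟨1, 5, by decide, by decide, conflictB_adjC _ _ _ _ H⟩
  · exact ⟨2, 5, by decide, by decide, conflictB_adjC _ _ _ _ H⟩
  · exact ⟨3, 5, by decide, by decide, conflictB_adjC _ _ _ _ H⟩
  · exact ⟨4, 5, by decide, by decide, conflictB_adjC _ _ _ _ H⟩

private lemma adjC_shift (x y : Fin 5) (d d' k : Fin 7) :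
    adjC (x, d + k) (y, d' + k) ↔ adjC (x, d) (y, d') := by
  unfold adjC d7
  have h1 : (d + k) - (d' + k) = d - d' := by abel
  have h2 : (d' + k) - (d + k) = d' - d := by abel
  rw [h1, h2]
  constructor
  · rintro ⟨hne, hle⟩
    refine ⟨fun h => hne ?_, hle⟩
    rw [Prod.ext_iff] at h ⊢
    exact ⟨h.1, by rw [show d = d' from h.2]⟩
  · rintro ⟨hne, hle⟩
    refine ⟨fun h => hne ?_, hle⟩
    rw [Prod.ext_iff] at h ⊢
    exact ⟨h.1, add_right_cancel (h.2 : d + k = d' + k)⟩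

private lemma key (c : Fin 7) (h : Fin 7 → Fin 5) :
    ∃ d d' : Fin 7, d ≠ c ∧ d' ≠ c ∧ adjC (h d, d) (h d', d') := by
  set k : Fin 7 := c - 6 with hk
  have hck : (6 : Fin 7) + k = c := by rw [hk]; abel
  obtain ⟨d, d', hd6, hd'6, hadj⟩ := key6 (fun d => h (d + k))
  refine ⟨d + k, d' + k, ?_, ?_, (adjC_shift _ _ _ _ _).2 hadj⟩
  · intro he; apply hd6; rw [← hck] at he; exact add_right_cancel he
  · intro he; apply hd'6; rw [← hck] at he; exact add_right_cancel he

private def s5 : Finset (Fin 5 × Fin 7) := {(0,0),(1,3),(2,6),(3,2),(4,5)}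

private lemma s5_card : s5.card = 5 := by decide

private lemma s5_indep : ∀ u v : Fin 5 × Fin 7, u ∈ s5 → v ∈ s5 → ¬ adjC u v := by decide

private lemma upper (t : Finset (Fin 5 × Fin 7))
    (ht : ((toroidalGrid 5 7).square)ᶜ.IsClique t) : t.card ≤ 5 := by
  classical
  by_contra hgt
  push_neg at hgt
  have nonadj : ∀ u ∈ t, ∀ v ∈ t, u ≠ v → ¬ adjC u v := by
    intro u hu v hv hne hc
    exact ((SimpleGraph.compl_adj _ _ _).1
      (ht (Finset.mem_coe.2 hu) (Finset.mem_coe.2 hv) hne)).2 ((adjIff u v).2 hc)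
  have hinj : ∀ u ∈ t, ∀ v ∈ t, u.2 = v.2 → u = v := by
    intro u hu v hv he
    by_contra hne
    exact nonadj u hu v hv hne (colEqC u v hne he)
  have himgcard : (t.image Prod.snd).card = t.card :=
    Finset.card_image_of_injOn fun u hu v hv he => hinj u hu v hv he
  have hcompl : ((t.image Prod.snd)ᶜ : Finset (Fin 7)).card ≤ 1 := by
    rw [Finset.card_compl]
    simp only [Fintype.card_fin]
    omega
  obtain ⟨c, hc⟩ := Finset.card_le_one_iff_subset_singleton.1 hcompl
  have himg : ∀ d : Fin 7, d ≠ c → d ∈ t.image Prod.snd := by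
    intro d hd
    by_contra hnd
    exact hd (Finset.mem_singleton.1 (hc (Finset.mem_compl.2 hnd)))
  have hex : ∀ d : Fin 7, d ≠ c → ∃ r : Fin 5, (r, d) ∈ t := by
    intro d hd
    obtain ⟨⟨r, d₀⟩, hv, he⟩ := Finset.mem_image.1 (himg d hd)
    dsimp at he
    subst he
    exact ⟨r, hv⟩
  let h : Fin 7 → Fin 5 := fun d =>
    if hd : ∃ r : Fin 5, (r, d) ∈ t then hd.choose else 0
  have hmem : ∀ d : Fin 7, d ≠ c → (h d, d) ∈ t := by
    intro d hd
    have hd' := hex d hd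
    simp only [h, dif_pos hd']
    exact hd'.choose_spec
  obtain ⟨d, d', hdc, hd'c, hadj⟩ := key c h
  exact nonadj _ (hmem d hdc) _ (hmem d' hd'c) hadj.1 hadj

theorem stmt16 : (toroidalGrid 5 7).square.indepNum' = 5 := by
  rw [SimpleGraph.indepNum']
  refine le_antisymm ?_ ?_
  · obtain ⟨t, ht⟩ := ((toroidalGrid 5 7).square)ᶜ.exists_isNClique_cliqueNum
    rw [← ht.card_eq]
    exact upper t ht.isClique
  · have hclique : ((toroidalGrid 5 7).square)ᶜ.IsClique s5 := by
      rw [SimpleGraph.isClique_iff]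
      intro u hu v hv hne
      rw [SimpleGraph.compl_adj]
      exact ⟨hne, fun ha =>
        s5_indep u v (Finset.mem_coe.1 hu) (Finset.mem_coe.1 hv) ((adjIff u v).1 ha)⟩
    have := SimpleGraph.IsClique.card_le_cliqueNum (tc := hclique)
    rwa [s5_card] at this
end

section
/- The chromatic number of the square of T_{11,11} = C_{11} □ C_{11} is at most 6. -/
open SimpleGraph

/-- A distance-2 coloring of the 11×11 torus, found by SAT search, as a flat list. -/
def colList : List ℕ :=
  [0,3,5,0,1,3,4,2,1,4,2, 5,4,2,3,4,5,0,3,5,0,3, 2,0,1,5,0,2,1,4,2,1,4,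
   1,3,4,2,1,4,5,0,3,5,0, 4,5,0,3,5,0,3,1,4,2,3, 0,2,1,4,2,1,4,5,0,1,5,
   1,4,5,0,3,5,0,2,3,4,2, 5,0,3,1,4,2,3,4,1,0,3, 2,1,4,5,0,1,5,0,2,5,4,
   3,5,0,2,3,4,2,3,4,1,0, 4,2,1,4,5,0,1,5,0,3,5]

def colN (i j : ℕ) : ℕ := colList.getD (i * 11 + j) 0

/-- All nonzero offsets realizable within torus distance 2, as naturals mod 11. -/
def offsN : List (ℕ × ℕ) :=
  [(1,0),(10,0),(0,1),(0,10),(2,0),(9,0),(0,2),(0,9),(1,1),(1,10),(10,1),(10,10)]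

def colMat : Fin 11 → Fin 11 → Fin 6 :=
  fun i j => ⟨colN i.val j.val % 6, Nat.mod_lt _ (by norm_num)⟩

/-- the unit offsets, at the `Fin` level -/
def unitOffs : List (Fin 11 × Fin 11) := [(1,0),(10,0),(0,1),(0,10)]

set_option maxRecDepth 100000 in
lemma N : ∀ i < 11, ∀ j < 11, ∀ p ∈ offsN,
    colN i j % 6 ≠ colN ((i + p.1) % 11) ((j + p.2) % 11) % 6 := by decide

set_option maxRecDepth 100000 in
lemma T1 : ∀ d ∈ unitOffs, (d.1.val, d.2.val) ∈ offsN := by decide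

set_option maxRecDepth 100000 in
lemma T2 : ∀ d1 ∈ unitOffs, ∀ d2 ∈ unitOffs, d1 + d2 ≠ 0 →
    ((d1 + d2).1.val, (d1 + d2).2.val) ∈ offsN := by decide

lemma S : ∀ (u d : Fin 11 × Fin 11), (d.1.val, d.2.val) ∈ offsN →
    colMat u.1 u.2 ≠ colMat (u + d).1 (u + d).2 := by
  intro u d hm
  have hN := N u.1.val u.1.isLt u.2.val u.2.isLt (d.1.val, d.2.val) hm
  have e1 : ((u + d).1 : ℕ) = (u.1.val + d.1.val) % 11 := Fin.val_add _ _
  have e2 : ((u + d).2 : ℕ) = (u.2.val + d.2.val) % 11 := Fin.val_add _ _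
  intro heq
  apply hN
  have := congrArg Fin.val heq
  simpa [colMat, e1, e2, Fin.val_add] using this

lemma mem_unitOffs_of_adj {u v : Fin 11 × Fin 11} (h : (toroidalGrid 11 11).Adj u v) :
    v - u ∈ unitOffs := by
  rcases h with ⟨h1, h2⟩ | ⟨h1, h2⟩
  · rcases (cycleGraph_adj (n := 9)).mp h1 with h | h
    · have e1 : v.1 - u.1 = 10 := by rw [← neg_sub, h]; decide
      have e2 : v.2 - u.2 = 0 := by rw [h2, sub_self]
      have : v - u = ((10 : Fin 11), (0 : Fin 11)) := Prod.ext e1 e2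
      rw [this]; simp [unitOffs]
    · have e2 : v.2 - u.2 = 0 := by rw [h2, sub_self]
      have : v - u = ((1 : Fin 11), (0 : Fin 11)) := Prod.ext h e2
      rw [this]; simp [unitOffs]
  · rcases (cycleGraph_adj (n := 9)).mp h1 with h | h
    · have e1 : v.2 - u.2 = 10 := by rw [← neg_sub, h]; decide
      have e2 : v.1 - u.1 = 0 := by rw [h2, sub_self]
      have : v - u = ((0 : Fin 11), (10 : Fin 11)) := Prod.ext e2 e1
      rw [this]; simp [unitOffs]
    · have e2 : v.1 - u.1 = 0 := by rw [h2, sub_self]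
      have : v - u = ((0 : Fin 11), (1 : Fin 11)) := Prod.ext e2 h
      rw [this]; simp [unitOffs]

lemma key_s19 : ∀ u v : Fin 11 × Fin 11, (toroidalGrid 11 11).square.Adj u v →
    colMat u.1 u.2 ≠ colMat v.1 v.2 := by
  have hv : ∀ u v : Fin 11 × Fin 11, u + (v - u) = v := by intro u v; abel
  rintro u v ⟨hne, h | ⟨w, h1, h2⟩⟩
  · have := S u (v - u) (T1 _ (mem_unitOffs_of_adj h))
    rwa [hv u v] at this
  · have e : (w - u) + (v - w) = v - u := sub_add_sub_cancel' w u v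
    have hm : ((v - u).1.val, (v - u).2.val) ∈ offsN := by
      rw [← e]
      exact T2 _ (mem_unitOffs_of_adj h1) _ (mem_unitOffs_of_adj h2)
        (by rw [e]; exact sub_ne_zero.mpr hne.symm)
    have := S u (v - u) hm
    rwa [hv u v] at this

theorem stmt19 : (toroidalGrid 11 11).square.chromaticNumber ≤ 6 := by
  have h : (toroidalGrid 11 11).square.Colorable 6 :=
    ⟨SimpleGraph.Coloring.mk (fun p => colMat p.1 p.2) (fun hadj => key_s19 _ _ hadj)⟩
  exact_mod_cast h.chromaticNumber_le
end
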